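/- Let R be a splitting poset for a Weyl symmetric function χ ∈ ℤ[Λ]^W. If R is fibrous, then R is edge-minimal: no splitting poset for χ is isomorphic, as an edge-colored directed graph, to a proper edge-colored subgraph of R. -/

import Mathlib

open scoped BigOperators RealInnerProductSpace

noncomputable section

/-- The coroot `β∨ = (2/⟨β,β⟩) β` of a vector `β`. -/
def coroot {E : Type*} [NormedAddCommGroup E] [InnerProductSpace ℝ E] (β : E) : E :=
  (2 / ⟪β, β⟫) • β

/-- The reflection `v ↦ v - ⟨v, β∨⟩ β` determined by `β`, as a plain function. -/
def rootReflection {E : Type*} [NormedAddCommGroup E] [InnerProductSpace ℝ E] (β v : E) : E :=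
  v - ⟪v, coroot β⟫ • β

/-- The determinant (sign) of a linear automorphism, as an integer (`±1` on the Weyl group). -/
def sgnDet {E : Type*} [NormedAddCommGroup E] [InnerProductSpace ℝ E] (w : E ≃ₗ[ℝ] E) : ℤ :=
  if LinearMap.det (w : E →ₗ[ℝ] E) = 1 then 1 else -1

/-- A finite crystallographic root system `Φ` spanning the real inner-product space `E`,
with a fixed base of simple roots `{αᵢ}_{i ∈ I}` (a basis of `E`), together with the
corresponding fundamental weights `{ωᵢ}` (the basis dual to the simple coroots). -/
structure RootSystemBase (E : Type*) [NormedAddCommGroup E] [InnerProductSpace ℝ E]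
    (I : Type*) [Fintype I] [DecidableEq I] where
  Φ : Set E
  finite : Φ.Finite
  zero_not_mem : (0 : E) ∉ Φ
  neg_mem : ∀ β ∈ Φ, -β ∈ Φ
  αBasis : Module.Basis I ℝ E
  simple_mem : ∀ i, αBasis i ∈ Φ
  reflect_mem : ∀ β ∈ Φ, ∀ γ ∈ Φ, rootReflection β γ ∈ Φ
  crystallographic : ∀ β ∈ Φ, ∀ γ ∈ Φ, ∃ k : ℤ, ⟪γ, coroot β⟫ = (k : ℝ)
  reduced : ∀ β ∈ Φ, ∀ t : ℝ, t • β ∈ Φ → t = 1 ∨ t = -1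
  base_int : ∀ β ∈ Φ, ∀ i, ∃ k : ℤ, αBasis.repr β i = (k : ℝ)
  base_signs : ∀ β ∈ Φ, (∀ i, 0 ≤ αBasis.repr β i) ∨ (∀ i, αBasis.repr β i ≤ 0)
  ω : I → E
  ω_dual : ∀ i j, ⟪ω i, coroot (αBasis j)⟫ = if i = j then (1 : ℝ) else 0

namespace RootSystemBase

variable {E : Type*} [NormedAddCommGroup E] [InnerProductSpace ℝ E]
  {I : Type*} [Fintype I] [DecidableEq I]

variable (S : RootSystemBase E I)

/-- The simple roots. -/
def α (i : I) : E := S.αBasis i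

/-- The set `Φ⁺` of positive roots. -/
def pos : Set E := {β | β ∈ S.Φ ∧ ∀ i, 0 ≤ S.αBasis.repr β i}

/-- The set `Φ⁻` of negative roots. -/
def neg : Set E := {β | β ∈ S.Φ ∧ ∀ i, S.αBasis.repr β i ≤ 0}

/-- The Weyl group `W`: the subgroup of the linear automorphism group of `E`
generated by the simple reflections. -/
def W : Subgroup (E ≃ₗ[ℝ] E) :=
  Subgroup.closure {w : E ≃ₗ[ℝ] E | ∃ i, ∀ v, w v = rootReflection (S.α i) v}

/-- `μ` lies in the weight lattice `Λ` (the ℤ-span of the fundamental weights). -/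
def IsWeight (μ : E) : Prop := ∃ c : I → ℤ, μ = ∑ i, (c i : ℝ) • S.ω i

/-- `μ` is a dominant weight (a nonnegative-integer combination of the `ωᵢ`). -/
def IsDominant (μ : E) : Prop := ∃ c : I → ℕ, μ = ∑ i, (c i : ℝ) • S.ω i

/-- `μ` is a strongly dominant weight. -/
def IsStronglyDominant (μ : E) : Prop :=
  ∃ c : I → ℤ, (∀ i, 0 < c i) ∧ μ = ∑ i, (c i : ℝ) • S.ω i

/-- The partial order on `Λ`: `μ ≤ ν` iff `ν - μ` is a nonnegative-integer combination
of simple roots. -/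
def wle (μ ν : E) : Prop := ∃ k : I → ℕ, ν - μ = ∑ i, (k i : ℝ) • S.α i

/-- `ϱ`, the sum of the fundamental weights. -/
def rho : E := ∑ i, S.ω i

/-- `ϱ∨ = Σᵢ (2/⟨αᵢ,αᵢ⟩) ωᵢ`. -/
def rhoCheck : E := ∑ i, (2 / ⟪S.α i, S.α i⟫) • S.ω i

/-- The weight diagram `Π(λ)` of a dominant weight. -/
def PiWt (lam : E) : Set E :=
  {μ | S.IsWeight μ ∧
    ∃ w : E ≃ₗ[ℝ] E, w ∈ S.W ∧ ∃ ν : E, S.IsDominant ν ∧ S.wle ν lam ∧ μ = w ν}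

/-- A saturated set of weights. -/
def Saturated (A : Set E) : Prop :=
  ∀ ν ∈ A, ∀ β ∈ S.Φ, ∀ k : ℤ,
    (((0 : ℝ) ≤ (k : ℝ) ∧ (k : ℝ) ≤ ⟪ν, coroot β⟫) ∨
      (⟪ν, coroot β⟫ ≤ (k : ℝ) ∧ (k : ℝ) ≤ 0)) →
    ν - (k : ℝ) • β ∈ A

/-- The `W`-orbit of `lam`. -/
def orbit (lam : E) : Set E := {μ | ∃ w : E ≃ₗ[ℝ] E, w ∈ S.W ∧ μ = w lam}

end RootSystemBase

/-- `e^μ`, a basis element of the group ring. -/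
def expw {E : Type*} [AddCommGroup E] (μ : E) : AddMonoidAlgebra ℤ E :=
  AddMonoidAlgebra.single μ 1

/-- The coefficient of `e^μ` in `φ`. -/
def coeffOf {E : Type*} [AddCommGroup E] (φ : AddMonoidAlgebra ℤ E) (μ : E) : ℤ :=
  (φ.coeff : E →₀ ℤ) μ

/-- The support of an element of the group ring. -/
def suppOf {E : Type*} [AddCommGroup E] (φ : AddMonoidAlgebra ℤ E) : Finset E :=
  (φ.coeff : E →₀ ℤ).support

/-- The action `w ⬝ e^μ = e^{w(μ)}` of a linear automorphism on the group ring. -/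
def actGR {E : Type*} [NormedAddCommGroup E] [InnerProductSpace ℝ E]
    (w : E ≃ₗ[ℝ] E) (φ : AddMonoidAlgebra ℤ E) : AddMonoidAlgebra ℤ E :=
  AddMonoidAlgebra.ofCoeff (Finsupp.mapDomain (⇑w) (φ.coeff : E →₀ ℤ))

namespace RootSystemBase

variable {E : Type*} [NormedAddCommGroup E] [InnerProductSpace ℝ E]
  {I : Type*} [Fintype I] [DecidableEq I]
variable (S : RootSystemBase E I)

/-- `φ` lies in the group ring `ℤ[Λ]`. -/
def InGroupRing (φ : AddMonoidAlgebra ℤ E) : Prop := ∀ μ ∈ suppOf φ, S.IsWeight μ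

/-- `φ` is a Weyl alternant: `w ⬝ φ = det(w) φ` for all `w ∈ W`. -/
def IsAlternant (φ : AddMonoidAlgebra ℤ E) : Prop :=
  ∀ w : E ≃ₗ[ℝ] E, w ∈ S.W → actGR w φ = sgnDet w • φ

/-- `φ` is `W`-invariant. -/
def IsInvariant (φ : AddMonoidAlgebra ℤ E) : Prop :=
  ∀ w : E ≃ₗ[ℝ] E, w ∈ S.W → actGR w φ = φ

/-- The alternation operator `𝒜(φ) = Σ_{w ∈ W} det(w) (w ⬝ φ)`. -/
def Alt (φ : AddMonoidAlgebra ℤ E) : AddMonoidAlgebra ℤ E :=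
  ∑ᶠ w : S.W, sgnDet (w : E ≃ₗ[ℝ] E) • actGR (w : E ≃ₗ[ℝ] E) φ

/-- `χ` is the Weyl bialternant attached to the dominant weight `lam`:  the unique
element of `ℤ[Λ]` with `𝒜(e^ϱ) ⬝ χ = 𝒜(e^{lam+ϱ})`. -/
def IsBialternant (lam : E) (χ : AddMonoidAlgebra ℤ E) : Prop :=
  S.InGroupRing χ ∧ S.Alt (expw S.rho) * χ = S.Alt (expw (lam + S.rho))

end RootSystemBase

/-- A finite ranked poset with covering edges colored by `I`, identified with its
edge-colored Hasse diagram:  `edge i x y` means there is a covering edge `x →_i y`, and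
`rank` is a rank function (each edge raises rank by one). -/
structure ColoredPoset (I : Type*) where
  V : Type
  [fintypeV : Fintype V]
  edge : I → V → V → Prop
  rank : V → ℤ
  rank_edge : ∀ i x y, edge i x y → rank y = rank x + 1

attribute [instance] ColoredPoset.fintypeV

namespace ColoredPoset

variable {I : Type*} (P : ColoredPoset I)

/-- One (undirected) step along an edge whose color lies in `J`. -/
def stepIn (J : Set I) (x y : P.V) : Prop := ∃ i ∈ J, P.edge i x y ∨ P.edge i y x

/-- `x` and `y` lie in the same `J`-component. -/
def connIn (J : Set I) (x y : P.V) : Prop := Relation.ReflTransGen (P.stepIn J) x y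

/-- The `i`-component `comp_i(x)` of `x`. -/
def comp (i : I) (x : P.V) : Set P.V := {y | P.connIn {i} x y}

/-- `ρ_i(x)`: the rank of `x` within its `i`-component. -/
def rhoi (i : I) (x : P.V) : ℕ := (P.rank x - sInf (P.rank '' P.comp i x)).toNat

/-- `l_i(x)`: the length of the `i`-component of `x`. -/
def li (i : I) (x : P.V) : ℕ :=
  (sSup (P.rank '' P.comp i x) - sInf (P.rank '' P.comp i x)).toNat

/-- `δ_i(x) = l_i(x) - ρ_i(x)`: the depth of `x` within its `i`-component. -/
def deltai (i : I) (x : P.V) : ℕ := P.li i x - P.rhoi i x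

/-- `m_i(x) = ρ_i(x) - δ_i(x) = 2ρ_i(x) - l_i(x)`. -/
def mi (i : I) (x : P.V) : ℤ := (P.rhoi i x : ℤ) - (P.deltai i x : ℤ)

/-- The partial order generated by the colored (covering) edges. -/
def ple (x y : P.V) : Prop := Relation.ReflTransGen (fun a b => ∃ i, P.edge i a b) x y

/-- The poset is connected. -/
def Connected : Prop := ∀ x y : P.V, P.connIn Set.univ x y

/-- The poset is fibrous:  every `i`-component is a chain. -/
def Fibrous : Prop :=
  ∀ (i : I) (x y : P.V), P.connIn {i} x y →
    Relation.ReflTransGen (P.edge i) x y ∨ Relation.ReflTransGen (P.edge i) y x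

end ColoredPoset

namespace RootSystemBase

variable {E : Type*} [NormedAddCommGroup E] [InnerProductSpace ℝ E]
  {I : Type*} [Fintype I] [DecidableEq I]
variable (S : RootSystemBase E I)

/-- The weight `wt(x) = Σᵢ m_i(x) ωᵢ` of an element of an edge-colored ranked poset. -/
def wtv (P : ColoredPoset I) (x : P.V) : E := ∑ i, (P.mi i x : ℝ) • S.ω i

/-- `P` is `M_Φ`-structured:  `wt(s) + αᵢ = wt(t)` whenever `s →_i t`. -/
def MStruct (P : ColoredPoset I) : Prop :=
  ∀ (i : I) (x y : P.V), P.edge i x y → S.wtv P x + S.α i = S.wtv P y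

/-- The weight generating function `WGF(P) = Σ_{x ∈ P} e^{wt(x)}`. -/
def WGF (P : ColoredPoset I) : AddMonoidAlgebra ℤ E := ∑ x : P.V, expw (S.wtv P x)

/-- `P` is a splitting poset for `χ`:  `P` is `M_Φ`-structured and `WGF(P) = χ`. -/
def IsSplittingPoset (P : ColoredPoset I) (χ : AddMonoidAlgebra ℤ E) : Prop :=
  S.MStruct P ∧ S.WGF P = χ

end RootSystemBase

/-! ### Auxiliary development for the proof of `statement15` -/

section EdgeMinimalityAux

open Finset
open scoped Classical

/-- Pure arithmetic: twice the sum of the first `n` integers. -/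
lemma auxS1 (n : ℕ) : 2 * ∑ k ∈ Finset.range n, (k : ℤ) = n * (n - 1) := by
  induction n with
  | zero => simp
  | succ n ih =>
      rw [Finset.sum_range_succ]
      push_cast
      push_cast at ih
      linear_combination ih

/-- Pure arithmetic: six times the sum of the squares of the first `n` integers. -/
lemma auxS2 (n : ℕ) : 6 * ∑ k ∈ Finset.range n, (k : ℤ)^2 = n * (n - 1) * (2 * n - 1) := by
  induction n with
  | zero => simp
  | succ n ih =>
      rw [Finset.sum_range_succ]
      push_cast
      push_cast at ih
      linear_combination ih

lemma aux_expand1 (m : ℕ) (c : ℤ) :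
    ∑ k ∈ Finset.range m, (2 * (k : ℤ) - c)^2
      = 4 * (∑ k ∈ Finset.range m, (k : ℤ)^2)
        - (4 * c) * (∑ k ∈ Finset.range m, (k : ℤ)) + (m : ℤ) * c^2 := by
  induction m with
  | zero => simp
  | succ m ih =>
      rw [Finset.sum_range_succ, Finset.sum_range_succ, Finset.sum_range_succ, ih]
      push_cast
      ring

lemma aux_expand2 (m : ℕ) (c : ℤ) :
    ∑ k ∈ Finset.range m, (((k : ℤ) + 1) * (c - (k : ℤ)))
      = c * (∑ k ∈ Finset.range m, (k : ℤ))
        - (∑ k ∈ Finset.range m, (k : ℤ)^2)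
        + (m : ℤ) * c - (∑ k ∈ Finset.range m, (k : ℤ)) := by
  induction m with
  | zero => simp
  | succ m ih =>
      rw [Finset.sum_range_succ, Finset.sum_range_succ, Finset.sum_range_succ, ih]
      push_cast
      ring

/-- The key chain identity: `∑_{k=0}^{n} (2k-n)² = 2 ∑_{k=0}^{n-1} (k+1)(n-k)`. -/
lemma range_identity (n : ℕ) :
    ∑ k ∈ Finset.range (n + 1), (2 * (k : ℤ) - (n : ℤ))^2
      = 2 * ∑ k ∈ Finset.range n, (((k : ℤ) + 1) * ((n : ℤ) - (k : ℤ))) := by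
  have e1' := auxS1 (n + 1); have e2' := auxS2 (n + 1)
  have e1 := auxS1 n; have e2 := auxS2 n
  rw [aux_expand1 (n + 1) (n : ℤ), aux_expand2 n (n : ℤ)]
  apply mul_left_cancel₀ (a := (3 : ℤ)) (by norm_num)
  push_cast at e1' e2' ⊢
  linear_combination 2 * e2' - 6 * (n : ℤ) * e1' + e2 + (3 - 3 * (n : ℤ)) * e1

end EdgeMinimalityAux

section EdgeMinimalityComb

open Finset
open scoped Classical

namespace ColoredPoset

variable {I : Type*}

/-- Fibrous at a single color. -/
def FibrousAt (P : ColoredPoset I) (i : I) : Prop :=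
  ∀ x y : P.V, P.connIn {i} x y →
    Relation.ReflTransGen (P.edge i) x y ∨ Relation.ReflTransGen (P.edge i) y x

lemma Fibrous.fibrousAt {P : ColoredPoset I} (h : P.Fibrous) (i : I) : P.FibrousAt i :=
  fun x y hxy => h i x y hxy

/-- The sub-poset determined by a subsystem of the colored edges (with the same rank
function). -/
def sub (P : ColoredPoset I) (e2 : I → P.V → P.V → Prop)
    (h : ∀ j a b, e2 j a b → P.edge j a b) : ColoredPoset I where
  V := P.V
  fintypeV := P.fintypeV
  edge := e2
  rank := P.rank
  rank_edge := fun i x y hxy => P.rank_edge i x y (h i x y hxy)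

variable {P : ColoredPoset I} {i : I}

lemma stepIn_symm {J : Set I} {x y : P.V} (h : P.stepIn J x y) : P.stepIn J y x := by
  obtain ⟨j, hj, h | h⟩ := h
  · exact ⟨j, hj, Or.inr h⟩
  · exact ⟨j, hj, Or.inl h⟩

lemma connIn_symm {J : Set I} {x y : P.V} (h : P.connIn J x y) : P.connIn J y x :=
  have : Std.Symm (P.stepIn J) := ⟨fun _ _ h => stepIn_symm h⟩
  Relation.ReflTransGen.symmetric.symm _ _ h

lemma mem_comp_self (i : I) (x : P.V) : x ∈ P.comp i x := Relation.ReflTransGen.refl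

lemma comp_eq_of_mem {x y : P.V} (h : y ∈ P.comp i x) : P.comp i y = P.comp i x := by
  ext z
  exact ⟨fun hz => Relation.ReflTransGen.trans h hz,
    fun hz => Relation.ReflTransGen.trans (connIn_symm h) hz⟩

lemma edge_mem_comp {a b x : P.V} (h : P.edge i a b) (ha : a ∈ P.comp i x) :
    b ∈ P.comp i x := Relation.ReflTransGen.tail ha ⟨i, rfl, Or.inl h⟩

lemma edge_mem_comp' {a b x : P.V} (h : P.edge i a b) (hb : b ∈ P.comp i x) :
    a ∈ P.comp i x := Relation.ReflTransGen.tail hb ⟨i, rfl, Or.inr h⟩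

lemma rtg_mem_comp {a b x : P.V} (h : Relation.ReflTransGen (P.edge i) a b)
    (ha : a ∈ P.comp i x) : b ∈ P.comp i x := by
  induction h with
  | refl => exact ha
  | tail _ h2 ih => exact edge_mem_comp h2 ih

lemma rtg_rank_le {x y : P.V} (h : Relation.ReflTransGen (P.edge i) x y) :
    P.rank x ≤ P.rank y := by
  induction h with
  | refl => exact le_rfl
  | tail _ h2 ih => have := P.rank_edge _ _ _ h2; omega

lemma rtg_rank_eq {x y : P.V} (h : Relation.ReflTransGen (P.edge i) x y)
    (hr : P.rank y ≤ P.rank x) : x = y := by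
  rcases Relation.ReflTransGen.cases_head h with h1 | ⟨c, hc, h2⟩
  · exact h1
  · exfalso
    have h3 := P.rank_edge _ _ _ hc
    have h4 := rtg_rank_le h2
    omega

lemma rankimg_ne (i : I) (x : P.V) : (P.rank '' P.comp i x).Nonempty :=
  ⟨P.rank x, x, mem_comp_self i x, rfl⟩

lemma sInf_rank_le {x y : P.V} (hy : y ∈ P.comp i x) :
    sInf (P.rank '' P.comp i x) ≤ P.rank y :=
  csInf_le (Set.toFinite _).bddBelow ⟨y, hy, rfl⟩

lemma rank_le_sSup {x y : P.V} (hy : y ∈ P.comp i x) :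
    P.rank y ≤ sSup (P.rank '' P.comp i x) :=
  le_csSup (Set.toFinite _).bddAbove ⟨y, hy, rfl⟩

lemma exists_rank_sInf (i : I) (x : P.V) :
    ∃ m ∈ P.comp i x, P.rank m = sInf (P.rank '' P.comp i x) := by
  obtain ⟨m, hm, hr⟩ := (rankimg_ne (P := P) i x).csInf_mem (Set.toFinite _)
  exact ⟨m, hm, hr⟩

lemma exists_rank_sSup (i : I) (x : P.V) :
    ∃ m ∈ P.comp i x, P.rank m = sSup (P.rank '' P.comp i x) := by
  obtain ⟨m, hm, hr⟩ := (rankimg_ne (P := P) i x).csSup_mem (Set.toFinite _)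
  exact ⟨m, hm, hr⟩

lemma rhoi_cast (i : I) (x : P.V) :
    (P.rhoi i x : ℤ) = P.rank x - sInf (P.rank '' P.comp i x) :=
  Int.toNat_of_nonneg (by have := sInf_rank_le (mem_comp_self i x); omega)

lemma li_cast (i : I) (x : P.V) :
    (P.li i x : ℤ) = sSup (P.rank '' P.comp i x) - sInf (P.rank '' P.comp i x) :=
  Int.toNat_of_nonneg (by
    have h1 := sInf_rank_le (mem_comp_self i x)
    have h2 := rank_le_sSup (mem_comp_self i x)
    omega)

lemma rhoi_le_li (i : I) (x : P.V) : P.rhoi i x ≤ P.li i x := by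
  have h1 := sInf_rank_le (mem_comp_self i x)
  have h2 := rank_le_sSup (mem_comp_self i x)
  unfold rhoi li
  omega

lemma deltai_cast (i : I) (x : P.V) :
    (P.deltai i x : ℤ) = sSup (P.rank '' P.comp i x) - P.rank x := by
  have h := rhoi_le_li (P := P) i x
  have h1 := rhoi_cast (P := P) i x
  have h2 := li_cast (P := P) i x
  unfold deltai
  omega

lemma mi_eq (i : I) (x : P.V) :
    P.mi i x = 2 * (P.rhoi i x : ℤ) - (P.li i x : ℤ) := by
  have h := rhoi_le_li (P := P) i x
  unfold mi deltai
  omega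

lemma rank_injOn (hfib : P.FibrousAt i) {x y z : P.V} (hy : y ∈ P.comp i x)
    (hz : z ∈ P.comp i x) (hr : P.rank y = P.rank z) : y = z := by
  rcases hfib y z (Relation.ReflTransGen.trans (connIn_symm hy) hz) with h | h
  · exact rtg_rank_eq h (by omega)
  · exact (rtg_rank_eq h (by omega)).symm

lemma rtg_of_rank_le (hfib : P.FibrousAt i) {x y z : P.V} (hy : y ∈ P.comp i x)
    (hz : z ∈ P.comp i x) (hr : P.rank y ≤ P.rank z) :
    Relation.ReflTransGen (P.edge i) y z := by
  rcases hfib y z (Relation.ReflTransGen.trans (connIn_symm hy) hz) with h | h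
  · exact h
  · have h2 : z = y := rtg_rank_eq h hr
    rw [h2]

lemma exists_rank_between {a b : P.V} (h : Relation.ReflTransGen (P.edge i) a b) :
    ∀ r : ℤ, P.rank a ≤ r → r ≤ P.rank b →
      ∃ y, Relation.ReflTransGen (P.edge i) a y ∧ P.rank y = r := by
  induction h using Relation.ReflTransGen.head_induction_on with
  | refl =>
      intro r h1 h2
      exact ⟨b, Relation.ReflTransGen.refl, le_antisymm h1 h2⟩
  | head h' h ih =>
      rename_i a' c
      intro r h1 h2
      rcases eq_or_lt_of_le h1 with heq | hlt
      · exact ⟨a', Relation.ReflTransGen.refl, heq⟩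
      · have hc := P.rank_edge _ _ _ h'
        obtain ⟨y, hy1, hy2⟩ := ih r (by omega) h2
        exact ⟨y, Relation.ReflTransGen.head h' hy1, hy2⟩

lemma exists_rank_comp (hfib : P.FibrousAt i) (x : P.V) {r : ℤ}
    (h1 : sInf (P.rank '' P.comp i x) ≤ r) (h2 : r ≤ sSup (P.rank '' P.comp i x)) :
    ∃ y ∈ P.comp i x, P.rank y = r := by
  obtain ⟨m, hm, hmr⟩ := exists_rank_sInf (P := P) i x
  obtain ⟨M, hM, hMr⟩ := exists_rank_sSup (P := P) i x
  have hmM : Relation.ReflTransGen (P.edge i) m M := rtg_of_rank_le hfib hm hM (by omega)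
  obtain ⟨y, hy1, hy2⟩ := exists_rank_between hmM r (by omega) (by omega)
  exact ⟨y, rtg_mem_comp hy1 hm, hy2⟩

lemma edge_of_rank_succ (hfib : P.FibrousAt i) {x y z : P.V} (hy : y ∈ P.comp i x)
    (hz : z ∈ P.comp i x) (hr : P.rank z = P.rank y + 1) : P.edge i y z := by
  have h := rtg_of_rank_le hfib hy hz (by omega)
  rcases Relation.ReflTransGen.cases_head h with h1 | ⟨c, hc, h2⟩
  · exfalso; rw [h1] at hr; omega
  · have hcr := P.rank_edge _ _ _ hc
    have hcz : c = z := rtg_rank_eq h2 (by omega)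
    rwa [← hcz]

/-- The bottom element of the `i`-component of `x`. -/
noncomputable def botv (P : ColoredPoset I) (i : I) (x : P.V) : P.V :=
  (exists_rank_sInf (P := P) i x).choose

lemma botv_mem (i : I) (x : P.V) : P.botv i x ∈ P.comp i x :=
  (exists_rank_sInf (P := P) i x).choose_spec.1

lemma rank_botv (i : I) (x : P.V) :
    P.rank (P.botv i x) = sInf (P.rank '' P.comp i x) :=
  (exists_rank_sInf (P := P) i x).choose_spec.2

lemma botv_congr (hfib : P.FibrousAt i) {x y : P.V} (h : y ∈ P.comp i x) :
    P.botv i y = P.botv i x := by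
  have h1 : P.botv i y ∈ P.comp i x := by
    have h2 := botv_mem (P := P) i y
    rwa [comp_eq_of_mem h] at h2
  apply rank_injOn hfib h1 (botv_mem i x)
  rw [rank_botv, rank_botv, comp_eq_of_mem h]

end ColoredPoset

end EdgeMinimalityComb

section EdgeMinimalitySums

open Finset
open scoped Classical

namespace ColoredPoset

variable {I : Type*} {P : ColoredPoset I} {i : I}

lemma comp_sum_sq (hfib : P.FibrousAt i) {b : P.V}
    (hb : P.rank b = sInf (P.rank '' P.comp i b)) :
    ∑ x ∈ Finset.univ.filter (· ∈ P.comp i b), (P.mi i x)^2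
      = 2 * ∑ p ∈ Finset.univ.filter
          (fun p : P.V × P.V => P.edge i p.1 p.2 ∧ p.1 ∈ P.comp i b),
          ((P.rhoi i p.2 : ℤ) * (P.deltai i p.1 : ℤ)) := by
  have hli : ∀ y ∈ P.comp i b, P.li i y = P.li i b := fun y hy => by
    unfold li; rw [comp_eq_of_mem hy]
  have hrho : ∀ y ∈ P.comp i b, (P.rhoi i y : ℤ) = P.rank y - P.rank b := fun y hy => by
    rw [rhoi_cast, comp_eq_of_mem hy, ← hb]
  have hsSup : sSup (P.rank '' P.comp i b) = P.rank b + (P.li i b : ℤ) := by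
    have h1 := li_cast (P := P) i b
    omega
  have hdel : ∀ y ∈ P.comp i b,
      (P.deltai i y : ℤ) = (P.li i b : ℤ) - (P.rhoi i y : ℤ) := fun y hy => by
    have h1 := deltai_cast (P := P) i y
    rw [comp_eq_of_mem hy] at h1
    have h2 := hrho y hy
    omega
  have hmi : ∀ y ∈ P.comp i b, P.mi i y = 2 * (P.rhoi i y : ℤ) - (P.li i b : ℤ) :=
    fun y hy => by rw [mi_eq, hli y hy]
  have hrhole : ∀ y ∈ P.comp i b, P.rhoi i y ≤ P.li i b := fun y hy => by
    have h1 := hrho y hy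
    have h2 := rank_le_sSup (P := P) hy
    omega
  set n := P.li i b with hn
  have hex : ∀ k : ℕ, k ≤ n → ∃ y ∈ P.comp i b, P.rank y = P.rank b + k := by
    intro k hk
    refine exists_rank_comp hfib b ?_ ?_
    · omega
    · rw [hsSup]; omega
  choose v hv1 hv2 using hex
  set w : ℕ → P.V := fun k => if h : k ≤ n then v k h else b with hw
  have hw1 : ∀ k, k ≤ n → w k ∈ P.comp i b := by
    intro k hk; rw [hw]; simp only [dif_pos hk]; exact hv1 k hk
  have hw2 : ∀ k, k ≤ n → P.rank (w k) = P.rank b + k := by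
    intro k hk; rw [hw]; simp only [dif_pos hk]; exact hv2 k hk
  have huniq : ∀ y ∈ P.comp i b, ∀ k : ℕ, k ≤ n → P.rank y = P.rank b + k → y = w k := by
    intro y hy k hk hr
    exact rank_injOn hfib hy (hw1 k hk) (by rw [hr, hw2 k hk])
  have hvert : ∑ x ∈ Finset.univ.filter (· ∈ P.comp i b), (P.mi i x)^2
      = ∑ k ∈ Finset.range (n + 1), (2 * (k : ℤ) - (n : ℤ))^2 := by
    refine Finset.sum_nbij' (i := fun x => P.rhoi i x) (j := w) ?_ ?_ ?_ ?_ ?_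
    · intro x hx
      rw [Finset.mem_filter] at hx
      rw [Finset.mem_range]
      show P.rhoi i x < n + 1
      have := hrhole x hx.2; omega
    · intro k hk
      rw [Finset.mem_range] at hk
      rw [Finset.mem_filter]
      exact ⟨Finset.mem_univ _, hw1 k (by omega)⟩
    · intro x hx
      rw [Finset.mem_filter] at hx
      exact (huniq x hx.2 (P.rhoi i x) (hrhole x hx.2) (by have := hrho x hx.2; omega)).symm
    · intro k hk
      rw [Finset.mem_range] at hk
      show P.rhoi i (w k) = k
      have h1 := hw2 k (by omega)
      have h2 := hrho _ (hw1 k (by omega))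
      omega
    · intro x hx
      rw [Finset.mem_filter] at hx
      rw [hmi x hx.2]
  have hedges : ∑ p ∈ Finset.univ.filter
        (fun p : P.V × P.V => P.edge i p.1 p.2 ∧ p.1 ∈ P.comp i b),
        ((P.rhoi i p.2 : ℤ) * (P.deltai i p.1 : ℤ))
      = ∑ k ∈ Finset.range n, (((k : ℤ) + 1) * ((n : ℤ) - (k : ℤ))) := by
    refine Finset.sum_nbij' (i := fun p => P.rhoi i p.1) (j := fun k => (w k, w (k + 1)))
      ?_ ?_ ?_ ?_ ?_
    · rintro p hp
      rw [Finset.mem_filter] at hp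
      obtain ⟨-, hpe, hp1⟩ := hp
      have hp2 : p.2 ∈ P.comp i b := edge_mem_comp hpe hp1
      have h1 := hrho _ hp1
      have h2 := hrho _ hp2
      have h3 := P.rank_edge _ _ _ hpe
      have h4 := hrhole _ hp2
      rw [Finset.mem_range]
      show P.rhoi i p.1 < n
      omega
    · intro k hk
      rw [Finset.mem_range] at hk
      rw [Finset.mem_filter]
      have h1 := hw1 k (by omega)
      have h2 := hw1 (k + 1) (by omega)
      have h3 := hw2 k (by omega)
      have h4 := hw2 (k + 1) (by omega)
      refine ⟨Finset.mem_univ _, ?_⟩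
      show P.edge i (w k) (w (k + 1)) ∧ w k ∈ P.comp i b
      exact ⟨edge_of_rank_succ hfib h1 h2 (by omega), h1⟩
    · rintro p hp
      rw [Finset.mem_filter] at hp
      obtain ⟨-, hpe, hp1⟩ := hp
      have hp2 : p.2 ∈ P.comp i b := edge_mem_comp hpe hp1
      have h3 := P.rank_edge _ _ _ hpe
      have hk1 : P.rhoi i p.1 ≤ n := hrhole _ hp1
      have hk2 : P.rhoi i p.1 + 1 ≤ n := by
        have := hrho _ hp1; have := hrho _ hp2; have := hrhole _ hp2; omega
      have e1 : p.1 = w (P.rhoi i p.1) :=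
        huniq _ hp1 _ hk1 (by have := hrho _ hp1; omega)
      have e2 : p.2 = w (P.rhoi i p.1 + 1) :=
        huniq _ hp2 _ hk2 (by have := hrho _ hp1; push_cast; omega)
      show (w (P.rhoi i p.1), w (P.rhoi i p.1 + 1)) = p
      rw [← e1, ← e2]
    · intro k hk
      rw [Finset.mem_range] at hk
      show P.rhoi i (w k) = k
      have h2 := hrho _ (hw1 k (by omega))
      have h3 := hw2 k (by omega)
      omega
    · rintro p hp
      rw [Finset.mem_filter] at hp
      obtain ⟨-, hpe, hp1⟩ := hp
      have hp2 : p.2 ∈ P.comp i b := edge_mem_comp hpe hp1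
      have h1 := hrho _ hp1
      have h2 := hrho _ hp2
      have h3 := P.rank_edge _ _ _ hpe
      have h4 := hdel _ hp1
      have h5 : (P.rhoi i p.2 : ℤ) = (P.rhoi i p.1 : ℤ) + 1 := by omega
      show (P.rhoi i p.2 : ℤ) * (P.deltai i p.1 : ℤ)
        = ((P.rhoi i p.1 : ℤ) + 1) * ((n : ℤ) - (P.rhoi i p.1 : ℤ))
      rw [h5, h4]
  rw [hvert, hedges]
  exact range_identity n

lemma sum_mi_sq (P : ColoredPoset I) (i : I) (hfib : P.FibrousAt i) :
    ∑ x : P.V, (P.mi i x)^2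
      = 2 * ∑ p ∈ Finset.univ.filter (fun p : P.V × P.V => P.edge i p.1 p.2),
          ((P.rhoi i p.2 : ℤ) * (P.deltai i p.1 : ℤ)) := by
  rw [← Finset.sum_fiberwise Finset.univ (fun x => P.botv i x) (fun x => (P.mi i x)^2),
    ← Finset.sum_fiberwise (Finset.univ.filter fun p : P.V × P.V => P.edge i p.1 p.2)
        (fun p => P.botv i p.1)
        (fun p => ((P.rhoi i p.2 : ℤ) * (P.deltai i p.1 : ℤ))),
    Finset.mul_sum]
  refine Finset.sum_congr rfl fun b _ => ?_
  by_cases hbb : P.botv i b = b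
  · have hbr : P.rank b = sInf (P.rank '' P.comp i b) := by
      conv_lhs => rw [← hbb]
      rw [rank_botv]
    have hfilt1 : Finset.univ.filter (fun x => P.botv i x = b)
        = Finset.univ.filter (· ∈ P.comp i b) := by
      ext x
      simp only [Finset.mem_filter, Finset.mem_univ, true_and]
      constructor
      · intro h
        exact connIn_symm (h ▸ botv_mem (P := P) i x)
      · intro h
        rw [botv_congr hfib h, hbb]
    have hfilt2 : (Finset.univ.filter (fun p : P.V × P.V => P.edge i p.1 p.2)).filter
          (fun p => P.botv i p.1 = b)
        = Finset.univ.filter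
            (fun p : P.V × P.V => P.edge i p.1 p.2 ∧ p.1 ∈ P.comp i b) := by
      ext p
      simp only [Finset.mem_filter, Finset.mem_univ, true_and, and_congr_right_iff]
      intro _
      constructor
      · intro h
        exact connIn_symm (h ▸ botv_mem (P := P) i p.1)
      · intro h
        rw [botv_congr hfib h, hbb]
    rw [hfilt1, hfilt2]
    exact comp_sum_sq hfib hbr
  · have h1 : Finset.univ.filter (fun x => P.botv i x = b) = ∅ := by
      ext x
      simp only [Finset.mem_filter, Finset.mem_univ, true_and, Finset.notMem_empty,
        iff_false]
      intro h
      apply hbb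
      rw [← h, botv_congr hfib (botv_mem (P := P) i x), h]
    have h2 : (Finset.univ.filter (fun p : P.V × P.V => P.edge i p.1 p.2)).filter
          (fun p => P.botv i p.1 = b) = ∅ := by
      ext p
      simp only [Finset.mem_filter, Finset.mem_univ, true_and, Finset.notMem_empty,
        iff_false, not_and]
      intro _ h
      apply hbb
      rw [← h, botv_congr hfib (botv_mem (P := P) i p.1), h]
    rw [h1, h2]
    simp

end ColoredPoset

end EdgeMinimalitySums

section EdgeMinimalitySub

open Finset
open scoped Classical

lemma csInf_image_add (s : Set ℤ) (hne : s.Nonempty) (hfin : s.Finite) (c : ℤ) :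
    sInf ((fun t => t + c) '' s) = sInf s + c := by
  apply le_antisymm
  · exact csInf_le (hfin.image _).bddBelow ⟨sInf s, hne.csInf_mem hfin, rfl⟩
  · refine le_csInf (hne.image _) ?_
    rintro b ⟨t, ht, rfl⟩
    have := csInf_le hfin.bddBelow ht
    simp only
    omega

lemma csSup_image_add (s : Set ℤ) (hne : s.Nonempty) (hfin : s.Finite) (c : ℤ) :
    sSup ((fun t => t + c) '' s) = sSup s + c := by
  apply le_antisymm
  · refine csSup_le (hne.image _) ?_
    rintro b ⟨t, ht, rfl⟩
    have := le_csSup hfin.bddAbove ht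
    simp only
    omega
  · exact le_csSup (hfin.image _).bddAbove ⟨sSup s, hne.csSup_mem hfin, rfl⟩

namespace ColoredPoset

variable {I : Type*} {P : ColoredPoset I} {i : I}

section SubPoset

variable (e2 : I → P.V → P.V → Prop) (hsub : ∀ j a b, e2 j a b → P.edge j a b)

lemma sub_comp_subset (j : I) (x : P.V) : (P.sub e2 hsub).comp j x ⊆ P.comp j x := by
  intro y hy
  refine Relation.ReflTransGen.mono ?_ _ _ hy
  rintro a b ⟨j', hj', h | h⟩
  · exact ⟨j', hj', Or.inl (hsub _ _ _ h)⟩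
  · exact ⟨j', hj', Or.inr (hsub _ _ _ h)⟩

lemma sub_rhoi_le (j : I) (x : P.V) : (P.sub e2 hsub).rhoi j x ≤ P.rhoi j x := by
  have h1 : sInf (P.rank '' P.comp j x) ≤ sInf (P.rank '' (P.sub e2 hsub).comp j x) :=
    csInf_le_csInf (Set.toFinite _).bddBelow
      ⟨P.rank x, x, mem_comp_self (P := P.sub e2 hsub) j x, rfl⟩
      (Set.image_mono (sub_comp_subset e2 hsub j x))
  show (P.rank x - sInf (P.rank '' (P.sub e2 hsub).comp j x)).toNat
      ≤ (P.rank x - sInf (P.rank '' P.comp j x)).toNat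
  omega

lemma sub_deltai_le (j : I) (x : P.V) : (P.sub e2 hsub).deltai j x ≤ P.deltai j x := by
  have h2 : sSup (P.rank '' (P.sub e2 hsub).comp j x) ≤ sSup (P.rank '' P.comp j x) :=
    csSup_le_csSup (Set.toFinite _).bddAbove
      ⟨P.rank x, x, mem_comp_self (P := P.sub e2 hsub) j x, rfl⟩
      (Set.image_mono (sub_comp_subset e2 hsub j x))
  have d1 : ((P.sub e2 hsub).deltai j x : ℤ)
      = sSup (P.rank '' (P.sub e2 hsub).comp j x) - P.rank x :=
    deltai_cast (P := P.sub e2 hsub) j x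
  have d2 := deltai_cast (P := P) j x
  omega

lemma sub_fibrousAt (hfib : P.FibrousAt i) : (P.sub e2 hsub).FibrousAt i := by
  have succ_unique : ∀ a b c : P.V, P.edge i a b → P.edge i a c → b = c := by
    intro a b c h1 h2
    refine rank_injOn hfib (edge_mem_comp h1 (mem_comp_self i a))
      (edge_mem_comp h2 (mem_comp_self i a)) ?_
    rw [P.rank_edge _ _ _ h1, P.rank_edge _ _ _ h2]
  have pred_unique : ∀ a b c : P.V, P.edge i a c → P.edge i b c → a = b := by
    intro a b c h1 h2
    refine rank_injOn hfib (edge_mem_comp' h1 (mem_comp_self i c))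
      (edge_mem_comp' h2 (mem_comp_self i c)) ?_
    have h3 := P.rank_edge _ _ _ h1
    have h4 := P.rank_edge _ _ _ h2
    omega
  intro x y h
  induction h with
  | refl => exact Or.inl Relation.ReflTransGen.refl
  | @tail z y' h1 hstep ih =>
      obtain ⟨j, hj, hzy | hyz⟩ := hstep
      · have hj' : j = i := hj
        subst hj'
        rcases ih with hxz | hzx
        · exact Or.inl (hxz.tail hzy)
        · rcases Relation.ReflTransGen.cases_head hzx with heq | ⟨w, hzw, hwx⟩
          · exact Or.inl (heq ▸ Relation.ReflTransGen.single hzy)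
          · have hwy : w = y' := succ_unique _ _ _ (hsub _ _ _ hzw) (hsub _ _ _ hzy)
            exact Or.inr (hwy ▸ hwx)
      · have hj' : j = i := hj
        subst hj'
        rcases ih with hxz | hzx
        · rcases Relation.ReflTransGen.cases_tail hxz with heq | ⟨w, hxw, hwz⟩
          · exact Or.inr (heq ▸ Relation.ReflTransGen.single hyz)
          · have hwy : w = y' := pred_unique _ _ _ (hsub _ _ _ hwz) (hsub _ _ _ hyz)
            exact Or.inl (hwy ▸ hxw)
        · exact Or.inr (Relation.ReflTransGen.head hyz hzx)

lemma sum_mi_sq_sub_lt (hfib : P.FibrousAt i) {x0 y0 : P.V}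
    (hedge0 : P.edge i x0 y0) (hmiss : ¬ e2 i x0 y0) :
    ∑ x : P.V, ((P.sub e2 hsub).mi i x)^2 < ∑ x : P.V, (P.mi i x)^2 := by
  have hP := sum_mi_sq P i hfib
  have hR : ∑ x : P.V, ((P.sub e2 hsub).mi i x)^2
      = 2 * ∑ p ∈ Finset.univ.filter (fun p : P.V × P.V => e2 i p.1 p.2),
          (((P.sub e2 hsub).rhoi i p.2 : ℤ) * ((P.sub e2 hsub).deltai i p.1 : ℤ)) :=
    sum_mi_sq (P.sub e2 hsub) i (sub_fibrousAt e2 hsub hfib)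
  rw [hP, hR]
  have hsubset : (Finset.univ.filter fun p : P.V × P.V => e2 i p.1 p.2)
      ⊆ (Finset.univ.filter fun p : P.V × P.V => P.edge i p.1 p.2) := by
    intro p hp
    rw [Finset.mem_filter] at hp ⊢
    exact ⟨hp.1, hsub _ _ _ hp.2⟩
  have step1 : ∑ p ∈ (Finset.univ.filter fun p : P.V × P.V => e2 i p.1 p.2),
        (((P.sub e2 hsub).rhoi i p.2 : ℤ) * ((P.sub e2 hsub).deltai i p.1 : ℤ))
      ≤ ∑ p ∈ (Finset.univ.filter fun p : P.V × P.V => e2 i p.1 p.2),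
        ((P.rhoi i p.2 : ℤ) * (P.deltai i p.1 : ℤ)) := by
    refine Finset.sum_le_sum fun p hp => ?_
    have h1 : ((P.sub e2 hsub).rhoi i p.2 : ℤ) ≤ (P.rhoi i p.2 : ℤ) := by
      exact_mod_cast sub_rhoi_le e2 hsub i p.2
    have h2 : ((P.sub e2 hsub).deltai i p.1 : ℤ) ≤ (P.deltai i p.1 : ℤ) := by
      exact_mod_cast sub_deltai_le e2 hsub i p.1
    exact mul_le_mul h1 h2 (Int.natCast_nonneg _) (Int.natCast_nonneg _)
  have hx0 : x0 ∈ P.comp i y0 := edge_mem_comp' hedge0 (mem_comp_self i y0)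
  have hy0 : y0 ∈ P.comp i x0 := edge_mem_comp hedge0 (mem_comp_self i x0)
  have hrpos : 0 < (P.rhoi i y0 : ℤ) := by
    have h1 := rhoi_cast (P := P) i y0
    have h4 := sInf_rank_le hx0
    have h5 := P.rank_edge _ _ _ hedge0
    omega
  have hdpos : 0 < (P.deltai i x0 : ℤ) := by
    have h1 := deltai_cast (P := P) i x0
    have h4 := rank_le_sSup hy0
    have h5 := P.rank_edge _ _ _ hedge0
    omega
  have step2 : ∑ p ∈ (Finset.univ.filter fun p : P.V × P.V => e2 i p.1 p.2),
        ((P.rhoi i p.2 : ℤ) * (P.deltai i p.1 : ℤ))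
      < ∑ p ∈ (Finset.univ.filter fun p : P.V × P.V => P.edge i p.1 p.2),
        ((P.rhoi i p.2 : ℤ) * (P.deltai i p.1 : ℤ)) := by
    refine Finset.sum_lt_sum_of_subset hsubset (i := (x0, y0)) ?_ ?_ ?_ ?_
    · rw [Finset.mem_filter]; exact ⟨Finset.mem_univ _, hedge0⟩
    · rw [Finset.mem_filter]; rintro ⟨-, h⟩; exact hmiss h
    · exact mul_pos hrpos hdpos
    · intro j _ _
      exact mul_nonneg (Int.natCast_nonneg _) (Int.natCast_nonneg _)
  linarith

end SubPoset

/-- Transport of `mi` along an isomorphism onto a sub-edge-system of `P`. -/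
lemma mi_map {Q : ColoredPoset I} (f : Q.V → P.V) (hinj : Function.Injective f)
    (hedge : ∀ j a b, Q.edge j a b → P.edge j (f a) (f b))
    (e2 : I → P.V → P.V → Prop) (hsub : ∀ j a b, e2 j a b → P.edge j a b)
    (he2 : ∀ j x y, e2 j x y ↔ ∃ a b, Q.edge j a b ∧ f a = x ∧ f b = y)
    (j : I) (a : Q.V) :
    (P.sub e2 hsub).mi j (f a) = Q.mi j a := by
  set R := P.sub e2 hsub with hRdef
  set c : ℤ := P.rank (f a) - Q.rank a with hc
  have fwd : ∀ d, Q.connIn {j} a d → R.connIn {j} (f a) (f d) := by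
    intro d h
    induction h with
    | refl => exact Relation.ReflTransGen.refl
    | tail h1 hstep ih =>
        obtain ⟨j', hj', h | h⟩ := hstep
        · exact ih.tail ⟨j', hj', Or.inl ((he2 j' _ _).mpr ⟨_, _, h, rfl, rfl⟩)⟩
        · exact ih.tail ⟨j', hj', Or.inr ((he2 j' _ _).mpr ⟨_, _, h, rfl, rfl⟩)⟩
  have bwd : ∀ z, R.connIn {j} (f a) z → ∃ d, z = f d ∧ Q.connIn {j} a d := by
    intro z h
    induction h with
    | refl => exact ⟨a, rfl, Relation.ReflTransGen.refl⟩
    | tail h1 hstep ih =>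
        obtain ⟨d, rfl, hd⟩ := ih
        obtain ⟨j', hj', h | h⟩ := hstep
        · obtain ⟨a', b', hq, ha', hb'⟩ := (he2 j' _ _).mp h
          have haa : a' = d := hinj ha'
          subst haa
          exact ⟨b', hb'.symm, hd.tail ⟨j', hj', Or.inl hq⟩⟩
        · obtain ⟨a', b', hq, ha', hb'⟩ := (he2 j' _ _).mp h
          have hbb : b' = d := hinj hb'
          subst hbb
          exact ⟨a', ha'.symm, hd.tail ⟨j', hj', Or.inr hq⟩⟩
  have hcomp : R.comp j (f a) = f '' Q.comp j a := by
    ext z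
    constructor
    · intro hz
      obtain ⟨d, rfl, hd⟩ := bwd z hz
      exact ⟨d, hd, rfl⟩
    · rintro ⟨d, hd, rfl⟩
      exact fwd d hd
  have hrank : ∀ y ∈ Q.comp j a, P.rank (f y) = Q.rank y + c := by
    intro y hy
    induction hy with
    | refl => omega
    | tail h1 hstep ih =>
        obtain ⟨j', hj', h | h⟩ := hstep
        · have g1 := Q.rank_edge _ _ _ h
          have g2 := P.rank_edge _ _ _ (hedge j' _ _ h)
          omega
        · have g1 := Q.rank_edge _ _ _ h
          have g2 := P.rank_edge _ _ _ (hedge j' _ _ h)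
          omega
  have himg : P.rank '' (R.comp j (f a)) = (fun t => t + c) '' (Q.rank '' Q.comp j a) := by
    rw [hcomp, Set.image_image, Set.image_image]
    exact Set.image_congr hrank
  have hQne : (Q.rank '' Q.comp j a).Nonempty := ⟨_, a, mem_comp_self j a, rfl⟩
  have hQfin : (Q.rank '' Q.comp j a).Finite := Set.toFinite _
  have h1 : sInf (P.rank '' R.comp j (f a)) = sInf (Q.rank '' Q.comp j a) + c := by
    rw [himg, csInf_image_add _ hQne hQfin c]
  have h2 : sSup (P.rank '' R.comp j (f a)) = sSup (Q.rank '' Q.comp j a) + c := by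
    rw [himg, csSup_image_add _ hQne hQfin c]
  have hfa : P.rank (f a) = Q.rank a + c := hrank a (mem_comp_self j a)
  have r1 : (R.rhoi j (f a) : ℤ) = P.rank (f a) - sInf (P.rank '' R.comp j (f a)) :=
    rhoi_cast (P := R) j (f a)
  have r2 := rhoi_cast (P := Q) j a
  have l1 : (R.li j (f a) : ℤ)
      = sSup (P.rank '' R.comp j (f a)) - sInf (P.rank '' R.comp j (f a)) :=
    li_cast (P := R) j (f a)
  have l2 := li_cast (P := Q) j a
  have m1 := mi_eq (P := R) j (f a)
  have m2 := mi_eq (P := Q) j a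
  have hrho_eq : (R.rhoi j (f a) : ℤ) = (Q.rhoi j a : ℤ) := by omega
  have hli_eq : (R.li j (f a) : ℤ) = (Q.li j a : ℤ) := by omega
  show R.mi j (f a) = Q.mi j a
  rw [m1, m2, hrho_eq, hli_eq]

end ColoredPoset

end EdgeMinimalitySub

section EdgeMinimalityGR

open Finset
open scoped Classical

/-- The additive functional on the group ring induced by a function `g : E → ℝ`,
sending `Σ c_μ e^μ` to `Σ c_μ g(μ)`. -/
noncomputable def grLin {E : Type*} (g : E → ℝ) : AddMonoidAlgebra ℤ E →+ ℝ :=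
  (Finsupp.liftAddHom fun μ =>
    AddMonoidHom.mk' (fun z : ℤ => (z : ℝ) * g μ) (by intro u v; push_cast; ring)).comp
    AddMonoidAlgebra.coeffAddEquiv.toAddMonoidHom

lemma grLin_expw {E : Type*} [AddCommGroup E] (g : E → ℝ) (μ : E) :
    grLin g (expw μ) = g μ := by
  have h := Finsupp.liftAddHom_apply_single
    (fun ν : E => AddMonoidHom.mk' (fun z : ℤ => (z : ℝ) * g ν)
      (by intro u v; push_cast; ring)) μ (1 : ℤ)
  simp only [AddMonoidHom.mk'_apply, Int.cast_one, one_mul] at h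
  exact h

namespace RootSystemBase

variable {E : Type*} [NormedAddCommGroup E] [InnerProductSpace ℝ E]
  {I : Type*} [Fintype I] [DecidableEq I] (S : RootSystemBase E I)

lemma grLin_WGF (g : E → ℝ) (R : ColoredPoset I) :
    grLin g (S.WGF R) = ∑ x : R.V, g (S.wtv R x) := by
  unfold WGF
  rw [map_sum]
  exact Finset.sum_congr rfl fun x _ => grLin_expw g _

lemma inner_wtv (R : ColoredPoset I) (i : I) (x : R.V) :
    ⟪S.wtv R x, coroot (S.α i)⟫ = (R.mi i x : ℝ) := by
  unfold wtv
  rw [sum_inner]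
  have hterm : ∀ j, ⟪(R.mi j x : ℝ) • S.ω j, coroot (S.α i)⟫
      = if j = i then (R.mi j x : ℝ) else 0 := by
    intro j
    rw [real_inner_smul_left]
    show (R.mi j x : ℝ) * ⟪S.ω j, coroot (S.αBasis i)⟫ = _
    rw [S.ω_dual j i]
    split_ifs <;> simp
  rw [Finset.sum_congr rfl fun j _ => hterm j]
  simp

lemma WGF_map {Q P : ColoredPoset I} (f : Q.V → P.V) (hbij : Function.Bijective f)
    (hedge : ∀ j a b, Q.edge j a b → P.edge j (f a) (f b))
    (e2 : I → P.V → P.V → Prop) (hsub : ∀ j a b, e2 j a b → P.edge j a b)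
    (he2 : ∀ j x y, e2 j x y ↔ ∃ a b, Q.edge j a b ∧ f a = x ∧ f b = y) :
    S.WGF (P.sub e2 hsub) = S.WGF Q := by
  unfold WGF
  refine (Fintype.sum_bijective f hbij _ _ fun a => ?_).symm
  congr 1
  unfold wtv
  refine Finset.sum_congr rfl fun j _ => ?_
  rw [ColoredPoset.mi_map f hbij.1 hedge e2 hsub he2 j a]

end RootSystemBase

end EdgeMinimalityGR

/-- **Edge-minimality of fibrous splitting posets** (Proposition 4.9):  if `R` is a fibrous
splitting poset for a Weyl symmetric function `χ ∈ ℤ[Λ]^W`, then no splitting poset for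
`χ` is isomorphic (as an edge-colored directed graph) to a proper edge-colored subgraph
of `R`:  any injective edge-and-color-preserving map from a splitting poset for `χ` into
`R` is onto all vertices and all colored edges of `R`. -/
theorem statement15 {E : Type*} [NormedAddCommGroup E] [InnerProductSpace ℝ E]
    [FiniteDimensional ℝ E] {I : Type*} [Fintype I] [DecidableEq I]
    (S : RootSystemBase E I) (χ : AddMonoidAlgebra ℤ E)
    (hχgr : S.InGroupRing χ) (hχinv : S.IsInvariant χ)
    (P : ColoredPoset I) (hP : S.IsSplittingPoset P χ) (hfib : P.Fibrous) :
    ∀ Q : ColoredPoset I, S.IsSplittingPoset Q χ →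
      ∀ f : Q.V → P.V, Function.Injective f →
        (∀ (i : I) (x y : Q.V), Q.edge i x y → P.edge i (f x) (f y)) →
        (Function.Surjective f ∧
          ∀ (i : I) (x y : P.V), P.edge i x y →
            ∃ a b : Q.V, Q.edge i a b ∧ f a = x ∧ f b = y) := by
  intro Q hQ f hinj hfedge
  have hbij : Function.Bijective f := by
    refine (Fintype.bijective_iff_injective_and_card f).mpr ⟨hinj, ?_⟩
    have h1 : grLin (fun _ : E => (1 : ℝ)) (S.WGF Q)
        = grLin (fun _ : E => (1 : ℝ)) (S.WGF P) := by
      rw [hQ.2, hP.2]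
    rw [S.grLin_WGF, S.grLin_WGF] at h1
    simp only [Finset.sum_const, Finset.card_univ, nsmul_eq_mul, mul_one] at h1
    exact_mod_cast h1
  refine ⟨hbij.2, ?_⟩
  by_contra hcon
  simp only [not_forall] at hcon
  obtain ⟨i, x0, y0, hedge0, hmiss⟩ := hcon
  set E2 : I → P.V → P.V → Prop :=
    fun j x y => ∃ a b, Q.edge j a b ∧ f a = x ∧ f b = y with hE2
  have hsub : ∀ j x y, E2 j x y → P.edge j x y := by
    rintro j x y ⟨a, b, hq, rfl, rfl⟩
    exact hfedge j a b hq
  have he2 : ∀ j x y, E2 j x y ↔ ∃ a b, Q.edge j a b ∧ f a = x ∧ f b = y :=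
    fun _ _ _ => Iff.rfl
  have hWGF : S.WGF (P.sub E2 hsub) = S.WGF P := by
    rw [S.WGF_map f hbij hfedge E2 hsub he2, hQ.2, hP.2]
  have hfibi : P.FibrousAt i := hfib.fibrousAt i
  have hmiss2 : ¬ E2 i x0 y0 := hmiss
  have hlt : ∑ x : P.V, ((P.sub E2 hsub).mi i x)^2 < ∑ x : P.V, (P.mi i x)^2 :=
    ColoredPoset.sum_mi_sq_sub_lt E2 hsub hfibi hedge0 hmiss2
  have heq : ∑ x : P.V, (((P.sub E2 hsub).mi i x : ℝ))^2
      = ∑ x : P.V, ((P.mi i x : ℝ))^2 := by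
    have h1 := congrArg (grLin (fun μ : E => (⟪μ, coroot (S.α i)⟫ : ℝ)^2)) hWGF
    rw [S.grLin_WGF, S.grLin_WGF] at h1
    calc ∑ x : P.V, (((P.sub E2 hsub).mi i x : ℝ))^2
        = ∑ x : (P.sub E2 hsub).V, ((⟪S.wtv (P.sub E2 hsub) x, coroot (S.α i)⟫ : ℝ))^2 :=
          Finset.sum_congr rfl fun x _ => by exact congrArg (· ^ 2) (S.inner_wtv (P.sub E2 hsub) i x).symm
      _ = ∑ x : P.V, ((⟪S.wtv P x, coroot (S.α i)⟫ : ℝ))^2 := h1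
      _ = ∑ x : P.V, ((P.mi i x : ℝ))^2 :=
          Finset.sum_congr rfl fun x _ => by rw [S.inner_wtv]
  have hltR : ∑ x : P.V, (((P.sub E2 hsub).mi i x : ℝ))^2
      < ∑ x : P.V, ((P.mi i x : ℝ))^2 := by
    exact_mod_cast hlt
  linarith
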